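/- Let A = (a_{ij}) be an n×n matrix with nonnegative integer entries and det(A) = ±1 such that: the (n−1)×(n−1) matrix obtained from A by deleting the first row and first column is the identity matrix; there is an index k with 1 < k ≤ n such that a_{k1} = 1 and a_{i1} = 0 for all i ≠ 1, k; and a_{1k} = a_{11} − 1. Then there exists a finite sequence of permissible row subtractions transforming A into the n×n identity matrix, where a row subtraction replaces the j-th row by the j-th row minus the i-th row (i ≠ j) and is permissible if all entries of the resulting matrix are nonnegative. -/
import Mathlib

open Matrix

/-- A permissible row subtraction on an integer matrix: the `i`-th row is subtracted from
the `j`-th row (`i ≠ j`), and all entries of the resulting matrix are nonnegative. -/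
def RowSubStepMat {m n : ℕ} (A A' : Matrix (Fin m) (Fin n) ℤ) : Prop :=
  ∃ i j : Fin m, i ≠ j ∧ A' = A.updateRow j (fun k => A j k - A i k) ∧ ∀ k l, 0 ≤ A' k l

namespace RowReduceAux

variable {n : ℕ}

/-- The matrix with first row `r`, row `k` equal to `e₀ + e_k`, and row `i` (for `i ≠ 0, k`)
equal to `e_i`. -/
def Mk (k : Fin (n + 1)) (r : Fin (n + 1) → ℤ) : Matrix (Fin (n + 1)) (Fin (n + 1)) ℤ :=
  Matrix.of fun i j =>
    if i = 0 then r j else if i = k then (if j = 0 ∨ j = k then 1 else 0)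
    else if j = i then 1 else 0

lemma Mk_nonneg (k : Fin (n + 1)) (r : Fin (n + 1) → ℤ) (hr : ∀ l, 0 ≤ r l) :
    ∀ i l, 0 ≤ Mk k r i l := by
  intro i l
  simp only [Mk, Matrix.of_apply]
  split_ifs <;> first | exact hr l | norm_num

lemma sum_toNat_lt {m : ℕ} {r r' : Fin m → ℤ} (h : ∀ l, r' l ≤ r l) (j : Fin m)
    (hj : r' j < r j) (hj0 : 0 ≤ r' j) :
    ∑ l, (r' l).toNat < ∑ l, (r l).toNat := by
  refine Finset.sum_lt_sum (fun i _ => Int.toNat_le_toNat (h i)) ⟨j, Finset.mem_univ j, ?_⟩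
  omega

lemma key (k : Fin (n + 1)) (hk : k ≠ 0) :
    ∀ (s : ℕ) (r : Fin (n + 1) → ℤ), (∑ l, (r l).toNat) ≤ s → (∀ l, 0 ≤ r l) →
      r 0 = r k + 1 →
      Relation.ReflTransGen RowSubStepMat (Mk k r) 1 := by
  intro s
  induction s with
  | zero =>
    intro r hs hnn hinv
    exfalso
    have h0 : (r 0).toNat = 0 :=
      Finset.sum_eq_zero_iff.mp (Nat.le_zero.mp hs) 0 (Finset.mem_univ _)
    have := hnn k
    omega
  | succ s ih =>
    intro r hs hnn hinv
    by_cases hE : ∃ j : Fin (n + 1), j ≠ 0 ∧ j ≠ k ∧ 1 ≤ r j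
    · obtain ⟨j, hj0, hjk, hj1⟩ := hE
      set r' : Fin (n + 1) → ℤ := fun l => r l - (if l = j then 1 else 0) with hr'
      have hrow : ∀ l, Mk k r j l = (if l = j then 1 else 0) := by
        intro l; simp [Mk, hj0, hjk]
      have hnn' : ∀ l, 0 ≤ r' l := by
        intro l
        simp only [hr']
        by_cases hl : l = j
        · subst hl; simp; omega
        · simp [hl]; exact hnn l
      have hM : Mk k r' = (Mk k r).updateRow 0 (fun l => Mk k r 0 l - Mk k r j l) := by
        ext i l
        rw [Matrix.updateRow_apply]
        by_cases hi : i = 0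
        · subst hi
          simp only [if_pos rfl, hrow]
          simp [Mk, hr']
        · simp [Mk, hi, if_neg hi]
      have hstep : RowSubStepMat (Mk k r) (Mk k r') :=
        ⟨j, 0, hj0, hM, Mk_nonneg k r' hnn'⟩
      have hle : ∀ l, r' l ≤ r l := by
        intro l; simp only [hr']; split_ifs <;> omega
      have hlt : ∑ l, (r' l).toNat < ∑ l, (r l).toNat := by
        refine sum_toNat_lt hle j ?_ (hnn' j)
        have : r' j = r j - 1 := by simp [hr']
        omega
      have hinv' : r' 0 = r' k + 1 := by
        have e0 : r' 0 = r 0 := by simp [hr', Ne.symm hj0]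
        have ek : r' k = r k := by simp [hr', Ne.symm hjk]
        omega
      exact Relation.ReflTransGen.head hstep (ih r' (by omega) hnn' hinv')
    · push_neg at hE
      have hzero : ∀ j : Fin (n + 1), j ≠ 0 → j ≠ k → r j = 0 := by
        intro j h1 h2
        have := hE j h1 h2
        have := hnn j
        omega
      by_cases hk1 : 1 ≤ r k
      · set r' : Fin (n + 1) → ℤ := fun l => r l - (if l = 0 ∨ l = k then 1 else 0) with hr'
        have hrow : ∀ l, Mk k r k l = (if l = 0 ∨ l = k then 1 else 0) := by
          intro l; simp [Mk, hk]
        have hnn' : ∀ l, 0 ≤ r' l := by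
          intro l
          simp only [hr']
          by_cases hl0 : l = 0
          · subst hl0; simp; omega
          · by_cases hlk : l = k
            · subst hlk; simp; omega
            · simp [hl0, hlk]; exact hnn l
        have hM : Mk k r' = (Mk k r).updateRow 0 (fun l => Mk k r 0 l - Mk k r k l) := by
          ext i l
          rw [Matrix.updateRow_apply]
          by_cases hi : i = 0
          · subst hi
            simp only [if_pos rfl, hrow]
            simp [Mk, hr']
          · simp [Mk, hi, if_neg hi]
        have hstep : RowSubStepMat (Mk k r) (Mk k r') :=
          ⟨k, 0, hk, hM, Mk_nonneg k r' hnn'⟩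
        have hle : ∀ l, r' l ≤ r l := by
          intro l; simp only [hr']; split_ifs <;> omega
        have hlt : ∑ l, (r' l).toNat < ∑ l, (r l).toNat := by
          refine sum_toNat_lt hle k ?_ (hnn' k)
          have : r' k = r k - 1 := by simp [hr']
          omega
        have hinv' : r' 0 = r' k + 1 := by
          have e0 : r' 0 = r 0 - 1 := by simp [hr']
          have ek : r' k = r k - 1 := by simp [hr']
          omega
        exact Relation.ReflTransGen.head hstep (ih r' (by omega) hnn' hinv')
      · have hrk : r k = 0 := by have := hnn k; omega
        have hr0 : r 0 = 1 := by omega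
        apply Relation.ReflTransGen.single
        refine ⟨0, k, Ne.symm hk, ?_, ?_⟩
        · ext i l
          rw [Matrix.updateRow_apply]
          by_cases hi : i = k
          · rw [if_pos hi]
            have hkl : Mk k r k l = (if l = 0 ∨ l = k then (1 : ℤ) else 0) := by
              simp [Mk, hk]
            have h0 : Mk k r 0 l = r l := by simp [Mk]
            show (1 : Matrix (Fin (n + 1)) (Fin (n + 1)) ℤ) i l = Mk k r k l - Mk k r 0 l
            rw [hkl, h0, Matrix.one_apply]
            by_cases hl0 : l = 0
            · subst hl0
              rw [if_neg (fun h => hk (hi.symm.trans h)), if_pos (Or.inl rfl), hr0]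
              norm_num
            · by_cases hlk : l = k
              · rw [if_pos (hi.trans hlk.symm), if_pos (Or.inr hlk), hlk, hrk]
                norm_num
              · rw [if_neg (fun h : i = l => hlk (h.symm.trans hi)),
                  if_neg (by tauto), hzero l hl0 hlk]
                norm_num
          · rw [if_neg hi, Matrix.one_apply]
            by_cases hi0 : i = 0
            · subst hi0
              have h0 : Mk k r 0 l = r l := by simp [Mk]
              rw [h0]
              by_cases hl0 : l = 0
              · rw [if_pos hl0.symm, hl0, hr0]
              · rw [if_neg (fun h => hl0 h.symm)]
                by_cases hlk : l = k
                · rw [hlk, hrk]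
                · exact (hzero l hl0 hlk).symm
            · have hMi : Mk k r i l = if l = i then (1 : ℤ) else 0 := by
                simp [Mk, hi0, hi]
              rw [hMi]
              by_cases hli : l = i
              · rw [if_pos hli, if_pos hli.symm]
              · rw [if_neg hli, if_neg (fun h => hli h.symm)]
        · intro a b
          rw [Matrix.one_apply]
          split_ifs <;> norm_num

end RowReduceAux

theorem row_reduce_special_matrix {n : ℕ}
    (A : Matrix (Fin (n + 1)) (Fin (n + 1)) ℤ)
    (hA : ∀ i j, 0 ≤ A i j) (hdet : A.det = 1 ∨ A.det = -1)
    (hminor : A.submatrix Fin.succ Fin.succ = (1 : Matrix (Fin n) (Fin n) ℤ))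
    (k : Fin (n + 1)) (hk : k ≠ 0)
    (hk1 : A k 0 = 1) (hcol : ∀ i : Fin (n + 1), i ≠ 0 → i ≠ k → A i 0 = 0)
    (h1k : A 0 k = A 0 0 - 1) :
    Relation.ReflTransGen RowSubStepMat A (1 : Matrix (Fin (n + 1)) (Fin (n + 1)) ℤ) := by
  have hm : ∀ (i j : Fin n), A i.succ j.succ = if i = j then 1 else 0 := by
    intro i j
    have := congrFun (congrFun hminor i) j
    simpa [Matrix.one_apply] using this
  have hm' : ∀ (i j : Fin (n + 1)) (hi : i ≠ 0) (hj : j ≠ 0),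
      A i j = if j = i then (1 : ℤ) else 0 := by
    intro i j hi hj
    rw [← Fin.succ_pred i hi, ← Fin.succ_pred j hj, hm]
    by_cases h : i.pred hi = j.pred hj
    · rw [if_pos h, if_pos (by rw [h])]
    · rw [if_neg h, if_neg (fun hh => h (Fin.succ_injective _ hh).symm)]
  have hAeq : A = RowReduceAux.Mk k (A 0) := by
    ext i j
    simp only [RowReduceAux.Mk, Matrix.of_apply]
    by_cases hi0 : i = 0
    · subst hi0; simp
    · rw [if_neg hi0]
      by_cases hik : i = k
      · rw [if_pos hik]
        by_cases hj0 : j = 0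
        · subst hj0
          rw [if_pos (Or.inl rfl), hik, hk1]
        · rw [hm' i j hi0 hj0]
          by_cases hji : j = i
          · rw [if_pos hji, if_pos (Or.inr (hji.trans hik))]
          · rw [if_neg hji, if_neg (fun h => h.elim hj0 (fun h => hji (h.trans hik.symm)))]
      · rw [if_neg hik]
        by_cases hj0 : j = 0
        · subst hj0
          rw [if_neg (Ne.symm hi0), hcol i hi0 hik]
        · exact hm' i j hi0 hj0
  rw [hAeq]
  exact RowReduceAux.key k hk (∑ l, ((A 0) l).toNat) (A 0) le_rfl (fun l => hA 0 l) (by omega)
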